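/- For every m ≥ 3 and every M > 0, there exists a colorful bin packing game with m colors, under the egalitarian cost function, whose price of stability exceeds M; that is, every Nash equilibrium uses more than M times the optimal number of bins. -/

import Mathlib

open Finset

/-- A bin (list of item indices, bottom to top) is feasible: no two adjacent
items share a color and the total size is at most the unit capacity. -/
def BinOK {n : ℕ} {C : Type*} (size : Fin n → ℝ) (color : Fin n → C)
    (b : List (Fin n)) : Prop :=
  (b.map color).Chain' (· ≠ ·) ∧ (b.map size).sum ≤ 1

/-- A strategy profile is a packing if every item occurs in exactly one bin, once. -/
def IsPacking {n : ℕ} (σ : Fin n → List (Fin n)) : Prop :=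
  ∀ i : Fin n, (∑ j : Fin n, ((σ j).count i)) = 1

/-- The number of open (nonempty) bins of a profile. -/
def openBins {n : ℕ} (σ : Fin n → List (Fin n)) : ℕ :=
  (Finset.univ.filter fun j => σ j ≠ []).card

/-- Nash equilibrium under the egalitarian cost function. -/
def EgalNE {n : ℕ} {C : Type*} (size : Fin n → ℝ) (color : Fin n → C)
    (σ : Fin n → List (Fin n)) : Prop :=
  IsPacking σ ∧ (∀ j, BinOK size color (σ j)) ∧
    ∀ (i : Fin n) (j j' : Fin n), j ≠ j' → i ∈ σ j →
      BinOK size color (σ j' ++ [i]) → (σ j').length < (σ j).length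



lemma countP_eq_sum_count {N : ℕ} (p : Fin N → Bool) (l : List (Fin N)) :
    l.countP p = ∑ i : Fin N, if p i then l.count i else 0 := by
  induction l with
  | nil => simp
  | cons a l ih =>
    rw [List.countP_cons, ih]
    have : ∀ i : Fin N, (if p i then (a :: l).count i else 0)
        = (if p i then l.count i else 0) + (if i = a then (if p i then 1 else 0) else 0) := by
      intro i
      rw [List.count_cons]
      by_cases h2 : a = i
      · subst h2
        by_cases h : p a <;> simp [h]
      · have hne : ¬ i = a := fun he => h2 he.symm
        by_cases h : p i <;> simp [h, h2, hne, beq_iff_eq]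
    rw [Finset.sum_congr rfl (fun i _ => this i), Finset.sum_add_distrib,
      Finset.sum_ite_eq' Finset.univ a (fun i => if p i then 1 else 0)]
    simp

lemma total_countP {N : ℕ} {σ : Fin N → List (Fin N)} (hp : IsPacking σ) (p : Fin N → Bool) :
    ∑ j, (σ j).countP p = (Finset.univ.filter fun i : Fin N => p i).card := by
  have : ∑ j, (σ j).countP p = ∑ i : Fin N, if p i then (∑ j, (σ j).count i) else 0 := by
    rw [Finset.sum_congr rfl (fun j _ => countP_eq_sum_count p (σ j)), Finset.sum_comm]
    refine Finset.sum_congr rfl (fun i _ => ?_)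
    by_cases h : p i <;> simp [h]
  rw [this, Finset.card_filter]
  refine Finset.sum_congr rfl (fun i _ => ?_)
  rw [hp i]

lemma countP_ge_of_all_mem {N : ℕ} (p : Fin N → Bool) (l : List (Fin N))
    (h : ∀ i, p i = true → i ∈ l) :
    (Finset.univ.filter fun i : Fin N => p i).card ≤ l.countP p := by
  rw [countP_eq_sum_count, Finset.card_filter]
  refine Finset.sum_le_sum (fun i _ => ?_)
  by_cases hp : p i
  · simp only [hp, if_true]
    exact List.count_pos_iff.mpr (h i hp)
  · simp [hp]

lemma countP_add_countP {N : ℕ} (p q : Fin N → Bool) (hd : ∀ i, ¬(p i = true ∧ q i = true))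
    (l : List (Fin N)) : l.countP p + l.countP q = l.countP (fun i => p i || q i) := by
  induction l with
  | nil => simp
  | cons a l ih =>
    rw [List.countP_cons, List.countP_cons, List.countP_cons]
    have := hd a
    by_cases h1 : p a <;> by_cases h2 : q a <;> simp [h1, h2] at this ⊢ <;> omega

lemma chain_countP {m N : ℕ} (color : Fin N → Fin m) (p : Fin N → Bool)
    (hmono : ∀ i i', p i = true → p i' = true → color i = color i') :
    ∀ l : List (Fin N), (l.map color).Chain' (· ≠ ·) →
      (l.countP p ≤ l.countP (fun i => !p i) + 1 ∧
       ∀ a tl, l = a :: tl → p a = false → l.countP p ≤ l.countP (fun i => !p i)) := by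
  intro l
  induction l with
  | nil => exact fun _ => ⟨by simp, by intro a tl h; cases h⟩
  | cons a l ih =>
    intro hch
    rw [List.map_cons] at hch
    have IH := ih hch.tail
    by_cases hpa : p a = true
    · refine ⟨?_, ?_⟩
      · have key : l.countP p ≤ l.countP (fun i => !p i) := by
          cases l with
          | nil => simp
          | cons b l2 =>
            have hab : color a ≠ color b := by
              rw [List.map_cons] at hch
              exact (List.isChain_cons_cons.mp hch).1
            have hpb : p b = false := by
              cases hpb : p b
              · rfl
              · exact absurd (hmono a b hpa hpb) hab
            exact IH.2 b l2 rfl hpb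
        rw [List.countP_cons, List.countP_cons]
        simp only [hpa]
        simp only [Bool.not_true, if_true]
        omega
      · intro a' tl heq hpa'
        cases heq
        rw [hpa] at hpa'
        cases hpa'
    · have hfa : p a = false := by simpa using hpa
      have e1 : (a :: l).countP p = l.countP p := by
        rw [List.countP_cons, hfa]; simp
      have e2 : (a :: l).countP (fun i => !p i) = l.countP (fun i => !p i) + 1 := by
        rw [List.countP_cons, hfa]; simp
      constructor
      · rw [e1, e2]; omega
      · intro a' tl heq _
        rw [e1, e2]; omega

lemma blocked {N m' : ℕ} (sz : Fin N → ℝ) (co : Fin N → Fin m') {L : List (Fin N)} (hne : L ≠ [])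
    (hok : BinOK sz co L) (i : Fin N) (hnot : ¬ BinOK sz co (L ++ [i])) :
    co (L.getLast hne) = co i ∨ 1 < (L.map sz).sum + sz i := by
  by_contra hcon
  push_neg at hcon
  obtain ⟨hc, hs⟩ := hcon
  apply hnot
  constructor
  · unfold List.Chain'; rw [List.map_append, List.isChain_append]
    refine ⟨hok.1, List.isChain_singleton _, ?_⟩
    intro x hx y hy
    rw [List.getLast?_map, List.getLast?_eq_getLast (l := L) hne] at hx
    simp only [Option.map_some, Option.mem_def, Option.some.injEq] at hx
    simp only [List.map_cons, List.map_nil, List.head?_cons, Option.mem_def,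
      Option.some.injEq] at hy
    subst hx; subst hy
    exact hc
  · rw [List.map_append, List.sum_append]
    simpa using hs

lemma last_color_ne {N m' : ℕ} (sz : Fin N → ℝ) (co : Fin N → Fin m') (l : List (Fin N))
    (a b : Fin N) (hok : BinOK sz co ((l ++ [a]) ++ [b])) : co a ≠ co b := by
  have h := hok.1
  unfold List.Chain' at h; rw [List.map_append, List.map_append, List.isChain_append] at h
  simp only [List.map_cons, List.map_nil] at h
  refine h.2.2 (co a) ?_ (co b) ?_
  · rw [List.getLast?_concat]; rfl
  · rfl

variable {t : ℕ}

abbrev nn (t : ℕ) : ℕ := 8*t+4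

def isC (t : ℕ) (i : Fin (nn t)) : Bool := decide ((i : ℕ) < 4*t+4)
def isA (t : ℕ) (i : Fin (nn t)) : Bool := decide (4*t+4 ≤ (i : ℕ) ∧ (i : ℕ) < 6*t+4)
def isB (t : ℕ) (i : Fin (nn t)) : Bool := decide (6*t+4 ≤ (i : ℕ))
def isS (t : ℕ) (i : Fin (nn t)) : Bool := decide (4*t+4 ≤ (i : ℕ))

noncomputable def sizeF (t : ℕ) (i : Fin (nn t)) : ℝ :=
  if (i : ℕ) < 4*t+4 then ((t : ℝ)+1)⁻¹ else 0

def colorF (t m : ℕ) (hm : 3 ≤ m) (i : Fin (nn t)) : Fin m :=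
  ⟨if (i : ℕ) < 4*t+4 then 2 else if (i : ℕ) < 6*t+4 then 0 else 1, by split_ifs <;> omega⟩

lemma sizeF_nonneg (i : Fin (nn t)) : 0 ≤ sizeF t i := by
  unfold sizeF; split_ifs
  · positivity
  · exact le_refl 0

lemma sizeF_le_one (i : Fin (nn t)) : sizeF t i ≤ 1 := by
  unfold sizeF; split_ifs
  · rw [inv_le_one_iff₀]; right; linarith [Nat.cast_nonneg (α := ℝ) t]
  · norm_num

lemma sum_sizes (l : List (Fin (nn t))) :
    (l.map (sizeF t)).sum = (l.countP (isC t) : ℝ) * ((t : ℝ)+1)⁻¹ := by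
  induction l with
  | nil => simp
  | cons a l ih =>
    rw [List.map_cons, List.sum_cons, ih, List.countP_cons]
    by_cases h : (a : ℕ) < 4*t+4 <;> simp [sizeF, isC, h] <;> push_cast <;> ring

lemma countC_le {m : ℕ} {co : Fin (nn t) → Fin m} {l : List (Fin (nn t))}
    (hok : BinOK (sizeF t) co l) : l.countP (isC t) ≤ t + 1 := by
  have h := hok.2
  rw [sum_sizes] at h
  have hpos : (0 : ℝ) < (t : ℝ) + 1 := by positivity
  have : (l.countP (isC t) : ℝ) ≤ (t : ℝ) + 1 := by
    rw [← div_eq_mul_inv, div_le_one hpos] at h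
    linarith
  exact_mod_cast this
lemma card_cond (N : ℕ) (P : ℕ → Prop) [DecidablePred P] :
    (Finset.univ.filter fun i : Fin N => P (i : ℕ)).card = ((Finset.range N).filter P).card := by
  rw [Finset.card_filter, Finset.card_filter]
  exact Fin.sum_univ_eq_sum_range (fun x => if P x then 1 else 0) N

lemma cardC : (Finset.univ.filter fun i : Fin (nn t) => isC t i = true).card = 4*t+4 := by
  have : ∀ i : Fin (nn t), (isC t i = true) = ((i:ℕ) < 4*t+4) := by
    intro i; simp [isC]
  simp only [this]
  rw [card_cond (nn t) (fun x => x < 4*t+4)]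
  have : (Finset.range (nn t)).filter (fun x => x < 4*t+4) = Finset.range (4*t+4) := by
    ext x; simp only [Finset.mem_filter, Finset.mem_range, nn]; omega
  rw [this, Finset.card_range]

lemma cardS : (Finset.univ.filter fun i : Fin (nn t) => isS t i = true).card = 4*t := by
  have : ∀ i : Fin (nn t), (isS t i = true) = (4*t+4 ≤ (i:ℕ)) := by
    intro i; simp [isS]
  simp only [this]
  rw [card_cond (nn t) (fun x => 4*t+4 ≤ x)]
  have : (Finset.range (nn t)).filter (fun x => 4*t+4 ≤ x) = Finset.Ico (4*t+4) (8*t+4) := by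
    ext x; simp only [Finset.mem_filter, Finset.mem_range, Finset.mem_Ico, nn]; omega
  rw [this, Nat.card_Ico]; omega

lemma cardA : (Finset.univ.filter fun i : Fin (nn t) => isA t i = true).card = 2*t := by
  have : ∀ i : Fin (nn t), (isA t i = true) = (4*t+4 ≤ (i:ℕ) ∧ (i:ℕ) < 6*t+4) := by
    intro i; simp [isA]
  simp only [this]
  rw [card_cond (nn t) (fun x => 4*t+4 ≤ x ∧ x < 6*t+4)]
  have : (Finset.range (nn t)).filter (fun x => 4*t+4 ≤ x ∧ x < 6*t+4)
      = Finset.Ico (4*t+4) (6*t+4) := by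
    ext x; simp only [Finset.mem_filter, Finset.mem_range, Finset.mem_Ico, nn]; omega
  rw [this, Nat.card_Ico]; omega

lemma cardB : (Finset.univ.filter fun i : Fin (nn t) => isB t i = true).card = 2*t := by
  have : ∀ i : Fin (nn t), (isB t i = true) = (6*t+4 ≤ (i:ℕ)) := by
    intro i; simp [isB]
  simp only [this]
  rw [card_cond (nn t) (fun x => 6*t+4 ≤ x)]
  have : (Finset.range (nn t)).filter (fun x => 6*t+4 ≤ x) = Finset.Ico (6*t+4) (8*t+4) := by
    ext x; simp only [Finset.mem_filter, Finset.mem_range, Finset.mem_Ico, nn]; omega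
  rw [this, Nat.card_Ico]; omega
lemma NE_lb {m : ℕ} (ht : 1 ≤ t) (hm : 3 ≤ m) (σ : Fin (nn t) → List (Fin (nn t)))
    (hσ : EgalNE (sizeF t) (colorF t m hm) σ) : 2*t+2 ≤ openBins σ := by
  obtain ⟨hpack, hok, hmov⟩ := hσ
  have hexists_mem : ∀ i : Fin (nn t), ∃ j, i ∈ σ j := by
    intro i
    by_contra h
    push_neg at h
    have h0 := hpack i
    rw [Finset.sum_eq_zero (fun j _ => List.count_eq_zero_of_not_mem (h j))] at h0
    exact absurd h0 (by omega)
  obtain ⟨j1, -, hj1max⟩ := Finset.exists_max_image Finset.univ (fun j => (σ j).length)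
    ⟨⟨0, by show (0:ℕ) < 8*t+4; omega⟩, Finset.mem_univ _⟩
  have hne : σ j1 ≠ [] := by
    obtain ⟨j, hj⟩ := hexists_mem ⟨0, by show (0:ℕ) < 8*t+4; omega⟩
    have h1 : 0 < (σ j).length := List.length_pos_of_mem hj
    have h2 := hj1max j (Finset.mem_univ j)
    intro he
    rw [he] at h2
    simp only [List.length_nil] at h2
    all_goals omega
  set i1 := (σ j1).getLast hne with hi1
  have hblock : ∀ i j, j ≠ j1 → i ∈ σ j →
      colorF t m hm i1 = colorF t m hm i ∨ 1 < ((σ j1).map (sizeF t)).sum + sizeF t i := by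
    intro i j hj hi
    refine blocked (sizeF t) (colorF t m hm) hne (hok j1) i (fun hOK => ?_)
    exact absurd (hmov i j j1 hj hi hOK) (not_lt.mpr (hj1max j (Finset.mem_univ j)))
  have hin : ∀ i : Fin (nn t), 4*t+4 ≤ (i:ℕ) →
      colorF t m hm i1 ≠ colorF t m hm i → i ∈ σ j1 := by
    intro i hsz hco
    obtain ⟨j, hij⟩ := hexists_mem i
    by_cases hj : j = j1
    · rwa [hj] at hij
    · rcases hblock i j hj hij with h | h
      · exact absurd h hco
      · exfalso
        have hs0 : sizeF t i = 0 := by unfold sizeF; rw [if_neg (by omega)]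
        have h2 := (hok j1).2
        rw [hs0] at h
        linarith
  have hCle1 : (σ j1).countP (isC t) ≤ t + 1 := countC_le (hok j1)
  have h3 : 4*t ≤ (σ j1).countP (isS t) + t + 2 := by
    rcases lt_or_ge ((i1 : ℕ)) (4*t+4) with hc | hrest
    · -- top is a c-item : all separators are in σ j1
      have hall : ∀ i : Fin (nn t), isS t i = true → i ∈ σ j1 := by
        intro i hiS
        simp only [isS, decide_eq_true_eq] at hiS
        refine hin i hiS ?_
        intro he
        simp only [colorF, Fin.mk.injEq] at he
        split_ifs at he <;> omega
      have h4 := countP_ge_of_all_mem (isS t) (σ j1) hall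
      rw [cardS] at h4
      omega
    · rcases lt_or_ge ((i1 : ℕ)) (6*t+4) with ha | hb
      · -- top is an a-separator : all b-separators in σ j1
        have hcY : 2*t ≤ (σ j1).countP (isB t) := by
          have hall : ∀ i : Fin (nn t), isB t i = true → i ∈ σ j1 := by
            intro i hiB
            simp only [isB, decide_eq_true_eq] at hiB
            refine hin i (by omega) ?_
            intro he
            simp only [colorF, Fin.mk.injEq] at he
            split_ifs at he <;> omega
          have h4 := countP_ge_of_all_mem (isB t) (σ j1) hall
          rwa [cardB] at h4
        have hmono : ∀ i i' : Fin (nn t), isB t i = true → isB t i' = true →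
            colorF t m hm i = colorF t m hm i' := by
          intro i i' hi hi'
          simp only [isB, decide_eq_true_eq] at hi hi'
          apply Fin.ext
          simp only [colorF]
          split_ifs <;> omega
        have hchain := (chain_countP (colorF t m hm) (isB t) hmono (σ j1) (hok j1).1).1
        have hsplit : (σ j1).countP (fun i => !(isB t i))
            = (σ j1).countP (isC t) + (σ j1).countP (isA t) := by
          rw [countP_add_countP (isC t) (isA t) (by intro i; simp [isC, isA]; all_goals omega)]
          refine List.countP_congr (fun x _ => ?_)
          simp [isB, isC, isA]
          all_goals omega
        have hS : (σ j1).countP (isS t)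
            = (σ j1).countP (isA t) + (σ j1).countP (isB t) := by
          rw [countP_add_countP (isA t) (isB t) (by intro i; simp [isA, isB]; all_goals omega)]
          refine (List.countP_congr (fun x _ => ?_)).symm
          simp [isS, isA, isB]
          all_goals omega
        omega
      · -- top is a b-separator : all a-separators in σ j1
        have hcY : 2*t ≤ (σ j1).countP (isA t) := by
          have hall : ∀ i : Fin (nn t), isA t i = true → i ∈ σ j1 := by
            intro i hiA
            simp only [isA, decide_eq_true_eq] at hiA
            refine hin i (by omega) ?_
            intro he
            simp only [colorF, Fin.mk.injEq] at he
            split_ifs at he <;> omega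
          have h4 := countP_ge_of_all_mem (isA t) (σ j1) hall
          rwa [cardA] at h4
        have hmono : ∀ i i' : Fin (nn t), isA t i = true → isA t i' = true →
            colorF t m hm i = colorF t m hm i' := by
          intro i i' hi hi'
          simp only [isA, decide_eq_true_eq] at hi hi'
          apply Fin.ext
          simp only [colorF]
          split_ifs <;> omega
        have hchain := (chain_countP (colorF t m hm) (isA t) hmono (σ j1) (hok j1).1).1
        have hsplit : (σ j1).countP (fun i => !(isA t i))
            = (σ j1).countP (isC t) + (σ j1).countP (isB t) := by
          rw [countP_add_countP (isC t) (isB t) (by intro i; simp [isC, isB]; all_goals omega)]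
          refine List.countP_congr (fun x _ => ?_)
          simp [isB, isC, isA]
          all_goals omega
        have hS : (σ j1).countP (isS t)
            = (σ j1).countP (isA t) + (σ j1).countP (isB t) := by
          rw [countP_add_countP (isA t) (isB t) (by intro i; simp [isA, isB]; all_goals omega)]
          refine (List.countP_congr (fun x _ => ?_)).symm
          simp [isS, isA, isB]
          all_goals omega
        omega
  -- global counting
  have hperbin : ∀ j, (σ j).countP (isC t) ≤ (σ j).countP (isS t)
      + (if σ j ≠ [] then 1 else 0) := by
    intro j
    by_cases hj : σ j = []
    · simp [hj]
    · rw [if_pos hj]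
      have hmono : ∀ i i' : Fin (nn t), isC t i = true → isC t i' = true →
          colorF t m hm i = colorF t m hm i' := by
        intro i i' hi hi'
        simp only [isC, decide_eq_true_eq] at hi hi'
        apply Fin.ext
        simp only [colorF]
        split_ifs <;> omega
      have hchain := (chain_countP (colorF t m hm) (isC t) hmono (σ j) (hok j).1).1
      have hcong : (σ j).countP (fun i => !(isC t i)) = (σ j).countP (isS t) := by
        refine List.countP_congr (fun x _ => ?_)
        simp [isC, isS]
        all_goals omega
      omega
  have totC : ∑ j, (σ j).countP (isC t) = 4*t+4 := by
    rw [total_countP hpack (isC t)]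
    exact cardC
  have totS : ∑ j, (σ j).countP (isS t) = 4*t := by
    rw [total_countP hpack (isS t)]
    exact cardS
  have hsplitC := Finset.sum_erase_add Finset.univ
    (fun j => (σ j).countP (isC t)) (Finset.mem_univ j1)
  have hsplitS := Finset.sum_erase_add Finset.univ
    (fun j => (σ j).countP (isS t)) (Finset.mem_univ j1)
  rw [totC] at hsplitC
  rw [totS] at hsplitS
  have hOb : (∑ j ∈ Finset.univ.erase j1, (if σ j ≠ [] then 1 else 0)) + 1 = openBins σ := by
    have h5 : openBins σ = ∑ j, (if σ j ≠ [] then 1 else 0) := by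
      rw [openBins, Finset.card_filter]
    rw [h5, ← Finset.sum_erase_add Finset.univ _ (Finset.mem_univ j1), if_pos hne]
  have hsum_le : ∑ j ∈ Finset.univ.erase j1, (σ j).countP (isC t)
      ≤ ∑ j ∈ Finset.univ.erase j1, ((σ j).countP (isS t) + (if σ j ≠ [] then 1 else 0)) :=
    Finset.sum_le_sum (fun j _ => hperbin j)
  rw [Finset.sum_add_distrib] at hsum_le
  omega
def hfun (t : ℕ) (j : ℕ) : Fin (nn t) :=
  ⟨if j < 4*t then (if j % 2 = 0 then 4*t+4 + j/2 else 6*t+4 + j/2) else 0,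
    by split_ifs <;> show _ < 8*t+4 <;> omega⟩

def bigbin (t : ℕ) : List (Fin (nn t)) := (List.range (4*t+1)).map (hfun t)

lemma bigbin_nodup : (bigbin t).Nodup := by
  refine List.Nodup.map_on ?_ List.nodup_range
  intro x hx y hy hxy
  rw [List.mem_range] at hx hy
  have h := congrArg Fin.val hxy
  simp only [hfun] at h
  split_ifs at h <;> omega

lemma mem_bigbin {i : Fin (nn t)} : i ∈ bigbin t ↔ ((i : ℕ) = 0 ∨ 4*t+4 ≤ (i : ℕ)) := by
  constructor
  · intro h
    rw [bigbin, List.mem_map] at h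
    obtain ⟨j, hj, rfl⟩ := h
    rw [List.mem_range] at hj
    simp only [hfun]
    split_ifs <;> omega
  · intro h
    rw [bigbin, List.mem_map]
    rcases h with h0 | hs
    · refine ⟨4*t, List.mem_range.mpr (by omega), ?_⟩
      apply Fin.ext
      simp only [hfun]
      rw [if_neg (by omega)]
      omega
    · by_cases ha : (i : ℕ) < 6*t+4
      · refine ⟨2*((i:ℕ) - (4*t+4)), List.mem_range.mpr (by omega), ?_⟩
        apply Fin.ext
        simp only [hfun]
        rw [if_pos (by omega), if_pos (by omega)]
        omega
      · have hb : (i : ℕ) < 8*t+4 := i.isLt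
        refine ⟨2*((i:ℕ) - (6*t+4)) + 1, List.mem_range.mpr (by omega), ?_⟩
        apply Fin.ext
        simp only [hfun]
        rw [if_pos (by omega), if_neg (by omega)]
        omega

lemma count_bigbin (i : Fin (nn t)) :
    (bigbin t).count i = if ((i : ℕ) = 0 ∨ 4*t+4 ≤ (i : ℕ)) then 1 else 0 := by
  split_ifs with h
  · exact List.count_eq_one_of_mem bigbin_nodup (mem_bigbin.mpr h)
  · exact List.count_eq_zero_of_not_mem (fun hmm => h (mem_bigbin.mp hmm))

lemma length_bigbin : (bigbin t).length = 4*t+1 := by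
  rw [bigbin, List.length_map, List.length_range]

lemma countC_bigbin : (bigbin t).countP (isC t) = 1 := by
  rw [bigbin, List.countP_map, List.range_succ, List.countP_append]
  have h1 : (List.range (4*t)).countP (isC t ∘ hfun t) = 0 := by
    rw [List.countP_eq_zero]
    intro j hj
    rw [List.mem_range] at hj
    simp only [Function.comp_apply, isC, hfun, decide_eq_true_eq]
    simp only [if_pos hj, decide_eq_true_eq]
    split_ifs <;> omega
  rw [h1]
  have h2 : (isC t ∘ hfun t) (4*t) = true := by
    simp only [Function.comp_apply, isC, hfun, decide_eq_true_eq]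
    simp only [if_neg (lt_irrefl (4*t)), decide_eq_true_eq]
    omega
  rw [List.countP_cons, List.countP_nil, if_pos h2]

lemma bigbin_ok {m : ℕ} (hm : 3 ≤ m) : BinOK (sizeF t) (colorF t m hm) (bigbin t) := by
  constructor
  · unfold List.Chain'; rw [bigbin, List.map_map, List.isChain_map]
    have h4 : 4*t+1 = (4*t).succ := rfl
    rw [h4, List.isChain_range_succ]
    intro j hj he
    simp only [Function.comp_apply, colorF, hfun, Fin.mk.injEq] at he
    split_ifs at he <;> omega
  · rw [sum_sizes, countC_bigbin]
    have hpos : (0:ℝ) < (t:ℝ) + 1 := by positivity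
    rw [Nat.cast_one, one_mul, inv_le_one_iff₀]
    right
    linarith

def sigma0 (t : ℕ) (j : Fin (nn t)) : List (Fin (nn t)) :=
  if (j : ℕ) = 0 then bigbin t else (if (j : ℕ) < 4*t+4 then [j] else [])

lemma exists_NE {m : ℕ} (ht : 1 ≤ t) (hm : 3 ≤ m) :
    ∃ σ, EgalNE (sizeF t) (colorF t m hm) σ := by
  refine ⟨sigma0 t, ?_, ?_, ?_⟩
  · -- packing
    intro i
    by_cases hi : (i : ℕ) = 0 ∨ 4*t+4 ≤ (i : ℕ)
    · rw [Finset.sum_eq_single (⟨0, by show (0:ℕ) < 8*t+4; omega⟩ : Fin (nn t))]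
      · rw [show sigma0 t ⟨0, by show (0:ℕ) < 8*t+4; omega⟩ = bigbin t from by
          simp [sigma0]]
        rw [count_bigbin, if_pos hi]
      · intro j _ hj
        have hjv : (j : ℕ) ≠ 0 := fun h0 => hj (Fin.ext h0)
        simp only [sigma0, if_neg hjv]
        split_ifs with h2
        · rw [List.count_singleton', if_neg]
          intro he
          have hv := congrArg Fin.val he
          omega
        · rfl
      · intro h
        exact absurd (Finset.mem_univ _) h
    · push_neg at hi
      rw [Finset.sum_eq_single i]
      · rw [show sigma0 t i = [i] from by simp [sigma0, hi.1, hi.2]]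
        simp
      · intro j _ hj
        by_cases hjv : (j : ℕ) = 0
        · simp only [sigma0, if_pos hjv]
          rw [count_bigbin, if_neg]
          push_neg
          exact ⟨hi.1, by omega⟩
        · simp only [sigma0, if_neg hjv]
          split_ifs with h2
          · rw [List.count_singleton', if_neg]
            intro he
            exact hj he
          · rfl
      · intro h
        exact absurd (Finset.mem_univ _) h
  · -- all bins ok
    intro j
    simp only [sigma0]
    split_ifs with h1 h2
    · exact bigbin_ok hm
    · refine ⟨List.isChain_singleton _, ?_⟩
      simp only [List.map_cons, List.map_nil, List.sum_cons, List.sum_nil, add_zero]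
      exact sizeF_le_one j
    · exact ⟨List.isChain_nil, by simp⟩
  · -- NE moves
    intro i j j' hjj' hi hok2
    have hiCj : (j:ℕ) ≠ 0 → ((i : ℕ) < 4*t+4 ∧ i = j) := by
      intro hjv
      simp only [sigma0, if_neg hjv] at hi
      split_ifs at hi with h2
      · rw [List.mem_singleton] at hi
        refine ⟨?_, hi⟩
        rw [hi]
        exact h2
      · exact absurd hi List.not_mem_nil
    by_cases hj'0 : (j' : ℕ) = 0
    · exfalso
      have hjv : (j : ℕ) ≠ 0 := fun h0 => hjj' (Fin.ext (by rw [h0, hj'0]))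
      obtain ⟨hiC, -⟩ := hiCj hjv
      rw [show sigma0 t j' = bigbin t from by simp [sigma0, hj'0]] at hok2
      rw [show bigbin t = (List.range (4*t)).map (hfun t) ++ [hfun t (4*t)] from by
        rw [bigbin, List.range_succ, List.map_append]
        simp] at hok2
      refine last_color_ne _ _ _ _ _ hok2 ?_
      apply Fin.ext
      simp only [colorF, hfun]
      split_ifs <;> omega
    · by_cases hj'c : (j' : ℕ) < 4*t+4
      · rw [show sigma0 t j' = [j'] from by simp [sigma0, hj'0, hj'c]] at hok2 ⊢
        by_cases hj0 : (j : ℕ) = 0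
        · rw [show sigma0 t j = bigbin t from by simp [sigma0, hj0]]
          rw [length_bigbin]
          simp only [List.length_singleton]
          omega
        · exfalso
          obtain ⟨hiC, -⟩ := hiCj hj0
          have hlast : colorF t m hm j' ≠ colorF t m hm i :=
            last_color_ne (sizeF t) (colorF t m hm) [] j' i hok2
          refine hlast ?_
          apply Fin.ext
          simp only [colorF]
          rw [if_pos hj'c, if_pos hiC]
      · rw [show sigma0 t j' = [] from by simp [sigma0, hj'0, hj'c]]
        simp only [List.length_nil]
        exact List.length_pos_of_mem hi
def gval (t r j : ℕ) : ℕ :=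
  if j % 2 = 0 then r*(t+1) + j/2
  else (if r < 2 then 4*t+4 + r*t + j/2 else 6*t+4 + (r-2)*t + j/2)

def gfun (t r j : ℕ) : Fin (nn t) :=
  ⟨if r < 4 ∧ j < 2*t+1 then gval t r j else 0, by
    unfold gval
    split_ifs with h h2 h3 <;> show _ < 8*t+4
    · obtain ⟨h4, h5⟩ := h
      interval_cases r <;> omega
    · obtain ⟨h4, h5⟩ := h
      interval_cases r <;> omega
    · obtain ⟨h4, h5⟩ := h
      interval_cases r <;> omega
    · omega⟩

def binT (t r : ℕ) : List (Fin (nn t)) := (List.range (2*t+1)).map (gfun t r)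

lemma memCond_iff {r : ℕ} (hr : r < 4) {i : Fin (nn t)} :
    i ∈ binT t r ↔
      ((r*(t+1) ≤ (i:ℕ) ∧ (i:ℕ) ≤ r*(t+1)+t) ∨
       (r < 2 ∧ 4*t+4+r*t ≤ (i:ℕ) ∧ (i:ℕ) < 4*t+4+r*t+t) ∨
       (2 ≤ r ∧ 6*t+4+(r-2)*t ≤ (i:ℕ) ∧ (i:ℕ) < 6*t+4+(r-2)*t+t)) := by
  constructor
  · intro h
    rw [binT, List.mem_map] at h
    obtain ⟨j, hj, rfl⟩ := h
    rw [List.mem_range] at hj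
    simp only [gfun, gval]
    interval_cases r <;> split_ifs <;> omega
  · intro h
    rw [binT, List.mem_map]
    rcases h with ⟨h1, h2⟩ | ⟨h1, h2, h3⟩ | ⟨h1, h2, h3⟩
    · refine ⟨2*((i:ℕ) - r*(t+1)), List.mem_range.mpr (by omega), ?_⟩
      apply Fin.ext
      simp only [gfun, gval]
      rw [if_pos ⟨hr, by omega⟩, if_pos (by omega)]
      omega
    · refine ⟨2*((i:ℕ) - (4*t+4+r*t)) + 1, List.mem_range.mpr (by omega), ?_⟩
      apply Fin.ext
      simp only [gfun, gval]
      rw [if_pos ⟨hr, by omega⟩, if_neg (by omega), if_pos h1]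
      omega
    · refine ⟨2*((i:ℕ) - (6*t+4+(r-2)*t)) + 1, List.mem_range.mpr (by omega), ?_⟩
      apply Fin.ext
      simp only [gfun, gval]
      rw [if_pos ⟨hr, by omega⟩, if_neg (by omega), if_neg (by omega)]
      omega

lemma binT_nodup {r : ℕ} (hr : r < 4) : (binT t r).Nodup := by
  refine List.Nodup.map_on ?_ List.nodup_range
  intro x hx y hy hxy
  rw [List.mem_range] at hx hy
  have h := congrArg Fin.val hxy
  simp only [gfun] at h
  rw [if_pos (show r < 4 ∧ x < 2*t+1 from ⟨hr, hx⟩),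
    if_pos (show r < 4 ∧ y < 2*t+1 from ⟨hr, hy⟩)] at h
  unfold gval at h
  interval_cases r <;> split_ifs at h <;> omega

lemma count_binT {r : ℕ} (hr : r < 4) (i : Fin (nn t)) :
    (binT t r).count i =
      if ((r*(t+1) ≤ (i:ℕ) ∧ (i:ℕ) ≤ r*(t+1)+t) ∨
       (r < 2 ∧ 4*t+4+r*t ≤ (i:ℕ) ∧ (i:ℕ) < 4*t+4+r*t+t) ∨
       (2 ≤ r ∧ 6*t+4+(r-2)*t ≤ (i:ℕ) ∧ (i:ℕ) < 6*t+4+(r-2)*t+t)) then 1 else 0 := by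
  split_ifs with h
  · exact List.count_eq_one_of_mem (binT_nodup hr) ((memCond_iff hr).mpr h)
  · exact List.count_eq_zero_of_not_mem (fun hmm => h ((memCond_iff hr).mp hmm))

lemma count_even : ∀ k : ℕ, (List.range (2*k+1)).countP (fun j => decide (j % 2 = 0)) = k+1 := by
  intro k
  induction k with
  | zero => rfl
  | succ k ih =>
    have e : List.range (2*(k+1)+1) = (List.range (2*k+1) ++ [2*k+1]) ++ [(2*k+1)+1] := by
      rw [show 2*(k+1)+1 = ((2*k+1)+1)+1 by omega, List.range_succ, List.range_succ]
    rw [e, List.countP_append, List.countP_append, ih]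
    have h1 : (List.countP (fun j => decide (j % 2 = 0)) [2*k+1]) = 0 := by
      simp only [List.countP_cons, List.countP_nil]
      rw [if_neg]
      simp only [decide_eq_true_eq]
      omega
    have h2 : (List.countP (fun j => decide (j % 2 = 0)) [(2*k+1)+1]) = 1 := by
      simp only [List.countP_cons, List.countP_nil]
      rw [if_pos]
      simp only [decide_eq_true_eq]
      omega
    omega

lemma countC_binT {r : ℕ} (hr : r < 4) : (binT t r).countP (isC t) = t+1 := by
  rw [binT, List.countP_map]
  rw [List.countP_congr (q := fun j => decide (j % 2 = 0)) ?_]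
  · exact count_even t
  · intro x hx
    rw [List.mem_range] at hx
    simp only [Function.comp_apply, isC, gfun, decide_eq_true_eq]
    simp only [if_pos (show r < 4 ∧ x < 2*t+1 from ⟨hr, hx⟩), decide_eq_true_eq]
    unfold gval
    interval_cases r <;> split_ifs <;> omega

lemma color_gfun {m r j : ℕ} (hm : 3 ≤ m) (hr : r < 4) (hj : j < 2*t+1) :
    (colorF t m hm (gfun t r j) : ℕ) =
      if j % 2 = 0 then 2 else (if r < 2 then 0 else 1) := by
  simp only [colorF, gfun]
  have hc : (r < 4 ∧ j < 2*t+1) = True := eq_true ⟨hr, hj⟩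
  simp only [hc, if_true]
  unfold gval
  interval_cases r <;> split_ifs <;> omega

lemma binT_ok {m r : ℕ} (hm : 3 ≤ m) (hr : r < 4) :
    BinOK (sizeF t) (colorF t m hm) (binT t r) := by
  constructor
  · have h4 : 2*t+1 = (2*t).succ := rfl
    unfold List.Chain'; rw [binT, List.map_map, List.isChain_map, h4, List.isChain_range_succ]
    intro j hj he
    have hv := congrArg Fin.val he
    simp only [Function.comp_apply] at hv
    rw [color_gfun hm hr (by omega), color_gfun hm hr (by omega)] at hv
    split_ifs at hv <;> omega
  · rw [sum_sizes, countC_binT hr]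
    push_cast
    rw [mul_inv_cancel₀ (by positivity)]

def tau0 (t : ℕ) (j : Fin (nn t)) : List (Fin (nn t)) :=
  if (j : ℕ) < 4 then binT t (j : ℕ) else []

lemma exists_opt {m : ℕ} (hm : 3 ≤ m) :
    IsPacking (tau0 t) ∧ (∀ j, BinOK (sizeF t) (colorF t m hm) (tau0 t j)) ∧
      openBins (tau0 t) = 4 := by
  refine ⟨?_, ?_, ?_⟩
  · intro i
    have hv : (i : ℕ) < 8*t+4 := i.isLt
    have hsum : ∑ j : Fin (nn t), (tau0 t j).count i
        = ∑ r ∈ Finset.range (8*t+4), ((if r < 4 then binT t r else []).count i) := by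
      exact Fin.sum_univ_eq_sum_range (fun r => ((if r < 4 then binT t r else []).count i)) _
    rw [hsum]
    rw [← Finset.sum_subset (Finset.range_subset_range.mpr (by omega : 4 ≤ 8*t+4))
      (fun x _ hx => by
        rw [Finset.mem_range] at hx
        rw [if_neg hx]
        simp)]
    rw [show (4:ℕ) = 3+1 from rfl, Finset.sum_range_succ, Finset.sum_range_succ,
      Finset.sum_range_succ, Finset.sum_range_one]
    norm_num
    rw [count_binT (by omega) i, count_binT (by omega) i, count_binT (by omega) i,
      count_binT (by omega) i]
    split_ifs <;> omega
  · intro j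
    unfold tau0
    split_ifs with h
    · exact binT_ok hm h
    · exact ⟨List.isChain_nil, by simp⟩
  · rw [openBins]
    have he : (Finset.univ.filter fun j : Fin (nn t) => tau0 t j ≠ [])
        = Finset.univ.filter fun j : Fin (nn t) => (j : ℕ) < 4 := by
      apply Finset.filter_congr
      intro j _
      unfold tau0
      constructor
      · intro h
        by_contra hc
        rw [if_neg hc] at h
        exact h rfl
      · intro h
        rw [if_pos h]
        intro hnil
        have := congrArg List.length hnil
        rw [binT, List.length_map, List.length_range, List.length_nil] at this
        omega
    rw [he, card_cond (nn t) (fun x => x < 4)]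
    have : (Finset.range (nn t)).filter (fun x => x < 4) = Finset.range 4 := by
      ext x
      simp only [Finset.mem_filter, Finset.mem_range, nn]
      omega
    rw [this, Finset.card_range]

/-- For every `m ≥ 3` and every `M > 0` there is a colorful bin packing game with
`m` colors whose price of stability under the egalitarian cost function exceeds
`M`: Nash equilibria exist, and every Nash equilibrium uses more than `M` times
the optimal number of bins. -/
theorem PoS_unbounded_egalitarian (m : ℕ) (hm : 3 ≤ m) (M : ℝ) (hM : 0 < M) :
    ∃ (n : ℕ) (size : Fin n → ℝ) (color : Fin n → Fin m),
      (∀ i, 0 ≤ size i ∧ size i ≤ 1) ∧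
      (∃ σ, EgalNE size color σ) ∧
      ∀ σ σstar : Fin n → List (Fin n), EgalNE size color σ →
        (IsPacking σstar ∧ ∀ j, BinOK size color (σstar j)) →
        (∀ τ, IsPacking τ → (∀ j, BinOK size color (τ j)) →
          openBins σstar ≤ openBins τ) →
        (openBins σ : ℝ) > M * (openBins σstar : ℝ) := by
  set t := max 1 ⌈2*M⌉₊ with htdef
  have ht : 1 ≤ t := le_max_left _ _
  have htM : 2*M ≤ (t : ℝ) := by
    calc 2*M ≤ (⌈2*M⌉₊ : ℝ) := Nat.le_ceil _
    _ ≤ (t : ℝ) := by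
      have : (⌈2*M⌉₊ : ℕ) ≤ t := le_max_right _ _
      exact_mod_cast this
  refine ⟨nn t, sizeF t, colorF t m hm, ?_, exists_NE ht hm, ?_⟩
  · intro i
    exact ⟨sizeF_nonneg i, sizeF_le_one i⟩
  · intro σ σstar hNE hstar hminimal
    have h1 : 2*t+2 ≤ openBins σ := NE_lb ht hm σ hNE
    obtain ⟨hp, hbok, h4⟩ := exists_opt (t := t) hm
    have h2 : openBins σstar ≤ 4 := h4 ▸ hminimal (tau0 t) hp hbok
    have c1 : (openBins σstar : ℝ) ≤ 4 := by exact_mod_cast h2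
    have c2 : (2*(t:ℝ)+2) ≤ (openBins σ : ℝ) := by exact_mod_cast h1
    have c3 : M * (openBins σstar : ℝ) ≤ M * 4 := by nlinarith
    have c4 : M * 4 < 2*(t:ℝ)+2 := by nlinarith
    calc M * (openBins σstar : ℝ) ≤ M * 4 := c3
      _ < 2*(t:ℝ)+2 := c4
      _ ≤ (openBins σ : ℝ) := c2
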